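/- Let G₁ = {Diag(1, e^t) : t ∈ ℝ} ⊂ GL(2,ℝ) and G₃ = {Diag(e^t, 1) : t ∈ ℝ}. Then for any A₁ ∈ G₁, A₃ ∈ G₃, and any A₂ in the conjugate R_{π/4} G₁ R_{−π/4}, the product A₃A₂A₁ is a nontrivial rotation in SO(2) only if A₂ = I and A₃A₁ ∈ SO(2); in particular if A₃A₂A₁ ∈ SO(2) and A₂ ≠ I then A₃A₂A₁ = ±I is impossible unless all factors are trivial, so the product of three such matrices is never a nontrivial rotation. -/
import Mathlib
open Real Matrix

noncomputable def rotMat (φ : ℝ) : Matrix (Fin 2) (Fin 2) ℝ :=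
  !![Real.cos φ, -Real.sin φ; Real.sin φ, Real.cos φ]

theorem stmt_11 (t₁ t₂ t₃ : ℝ)
    (A₁ : Matrix (Fin 2) (Fin 2) ℝ) (hA₁ : A₁ = !![1, 0; 0, Real.exp t₁])
    (A₂ : Matrix (Fin 2) (Fin 2) ℝ)
    (hA₂ : A₂ = rotMat (π / 4) * !![1, 0; 0, Real.exp t₂] * rotMat (-(π / 4)))
    (A₃ : Matrix (Fin 2) (Fin 2) ℝ) (hA₃ : A₃ = !![Real.exp t₃, 0; 0, 1])
    (hrot : ∃ φ : ℝ, A₃ * A₂ * A₁ = rotMat φ) :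
    A₃ * A₂ * A₁ = 1 := by
  obtain ⟨φ, h⟩ := hrot
  subst hA₁ hA₂ hA₃
  have h2 : Real.sqrt 2 * Real.sqrt 2 = 2 := Real.mul_self_sqrt (by norm_num)
  set a := Real.exp t₁ with ha
  set b := Real.exp t₂ with hb
  set c := Real.exp t₃ with hc
  have hap : 0 < a := Real.exp_pos t₁
  have hbp : 0 < b := Real.exp_pos t₂
  have hcp : 0 < c := Real.exp_pos t₃
  have h' := h
  simp only [rotMat, Real.cos_pi_div_four, Real.sin_pi_div_four, Real.cos_neg,
    Real.sin_neg, Matrix.mul_fin_two] at h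
  have e00 := congr_fun (congr_fun h 0) 0
  have e01 := congr_fun (congr_fun h 0) 1
  have e10 := congr_fun (congr_fun h 1) 0
  have e11 := congr_fun (congr_fun h 1) 1
  simp only [Matrix.of_apply, Matrix.cons_val_zero, Matrix.cons_val_one, Matrix.head_cons] at e00 e01 e10 e11
  have f00 : c * (1 + b) / 2 = Real.cos φ := by
    first
    | linear_combination e00 + (c*(1+b)/4) * h2
    | linear_combination e00 - (c*(1+b)/4) * h2
  have f01 : c * a * (1 - b) / 2 = -Real.sin φ := by
    first
    | linear_combination e01 + (c*a*(1-b)/4) * h2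
    | linear_combination e01 - (c*a*(1-b)/4) * h2
  have f10 : (1 - b) / 2 = Real.sin φ := by
    first
    | linear_combination e10 + ((1-b)/4) * h2
    | linear_combination e10 - ((1-b)/4) * h2
  have f11 : a * (1 + b) / 2 = Real.cos φ := by
    first
    | linear_combination e11 + (a*(1+b)/4) * h2
    | linear_combination e11 - (a*(1+b)/4) * h2
  clear e00 e01 e10 e11
  have hb1 : b = 1 := by nlinarith [mul_pos hcp hap, f01, f10]
  have hsin : Real.sin φ = 0 := by rw [hb1] at f10; linarith
  have hcos : Real.cos φ = c := by rw [hb1] at f00; linarith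
  have hpyth := Real.sin_sq_add_cos_sq φ
  have hc1 : c = 1 := by nlinarith
  have ha1 : a = 1 := by rw [hb1] at f00 f11; nlinarith
  rw [h', rotMat, hsin, hcos, hc1, Matrix.one_fin_two]
  norm_num
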